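/- For every n ≥ 1 and d ≥ 1, the d^n vectors (Z_d^{j₁} ⊗ X_d^{j₂} ⊗ ⋯ ⊗ X_d^{jₙ}) · GHZ_{n,d}, indexed by (j₁, …, jₙ) ∈ {0, …, d-1}^n, form an orthonormal basis of (ℂ^d)^{⊗n} ≅ ℂ^{d^n}, where GHZ_{n,d} = (1/√d) ∑_{k=0}^{d-1} e_k^{⊗n} is the generalized GHZ state. -/

import Mathlib

open Matrix

/-- A family of vectors in `ℂ^κ` forms an orthonormal basis: the vectors are
pairwise orthogonal unit vectors and they span the whole space. -/
def IsONBasis {ι κ : Type*} [Fintype ι] [DecidableEq ι] [Fintype κ] (v : ι → κ → ℂ) : Prop :=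
  (∀ j j', star (v j) ⬝ᵥ v j' = if j = j' then 1 else 0) ∧
    Submodule.span ℂ (Set.range v) = ⊤

/-- The `n`-fold Kronecker product `U 0 ⊗ ⋯ ⊗ U (n-1)` of `d×d` matrices, acting on
`(ℂ^d)^{⊗n} ≅ ℂ^{d^n}` indexed by `Fin n → Fin d`. -/
def kronPow {n d : ℕ} (U : Fin n → Matrix (Fin d) (Fin d) ℂ) :
    Matrix (Fin n → Fin d) (Fin n → Fin d) ℂ :=
  Matrix.of fun x y => ∏ k, U k (x k) (y k)

/-- The generalised Pauli clock matrix `Z_d = ∑_l e^{2πil/d} |l⟩⟨l|`. -/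
noncomputable def clockZ (d : ℕ) : Matrix (Fin d) (Fin d) ℂ :=
  Matrix.of fun l m =>
    if l = m then Complex.exp (2 * (Real.pi : ℂ) * Complex.I * ((l : ℕ) : ℂ) / (d : ℂ)) else 0

/-- The generalised Pauli shift matrix `X_d = ∑_l |l+1 mod d⟩⟨l|`. -/
def shiftX (d : ℕ) : Matrix (Fin d) (Fin d) ℂ :=
  Matrix.of fun l m => if (l : ℕ) = ((m : ℕ) + 1) % d then 1 else 0

/-- The generalised GHZ state `GHZ_{n,d} = (1/√d) ∑_k e_k^{⊗n}`: its coordinate at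
`x : Fin n → Fin d` is `1/√d` if `x` is constant and `0` otherwise. -/
noncomputable def GHZ (n d : ℕ) : (Fin n → Fin d) → ℂ :=
  fun x => if ∀ k k', x k = x k' then ((Real.sqrt d : ℂ))⁻¹ else 0

/-- The `d^n` vectors `(Z_d^{j₁} ⊗ X_d^{j₂} ⊗ ⋯ ⊗ X_d^{jₙ}) · GHZ_{n,d}`, indexed by
`(j₁,…,jₙ) ∈ {0,…,d-1}^n`, form an orthonormal basis of `(ℂ^d)^{⊗n} ≅ ℂ^{d^n}`. -/

lemma clockZ_eq (d : ℕ) : clockZ d =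
    Matrix.diagonal (fun l : Fin d => Complex.exp (2 * (Real.pi : ℂ) * Complex.I * ((l : ℕ) : ℂ) / (d : ℂ))) := by
  ext l m
  by_cases h : l = m <;> simp [clockZ, Matrix.diagonal, h]

lemma clockZ_pow (d m : ℕ) (l l' : Fin d) :
    (clockZ d ^ m) l l' = if l = l'
      then Complex.exp (2 * (Real.pi : ℂ) * Complex.I * ((l : ℕ) : ℂ) / (d : ℂ)) ^ m else 0 := by
  rw [clockZ_eq, Matrix.diagonal_pow]
  by_cases h : l = l' <;> simp [Matrix.diagonal, h]

lemma shiftX_apply (d : ℕ) [NeZero d] (l m : Fin d) :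
    shiftX d l m = if l = m + 1 then 1 else 0 := by
  have : ((m + 1 : Fin d) : ℕ) = ((m : ℕ) + 1) % d := by
    simp [Fin.add_def, Nat.add_mod, Nat.mod_mod_of_dvd]
  rw [shiftX]
  simp only [Matrix.of_apply]
  congr 1
  rw [← this, Fin.val_eq_val]

open Fin.NatCast Fin.CommRing in
lemma shiftX_pow (d : ℕ) [NeZero d] (m : ℕ) (l l' : Fin d) :
    (shiftX d ^ m) l l' = if l = l' + (m : Fin d) then 1 else 0 := by
  induction m generalizing l' with
  | zero => simp [Matrix.one_apply]
  | succ m ih =>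
    rw [pow_succ, Matrix.mul_apply]
    simp only [ih, shiftX_apply]
    rw [Finset.sum_eq_single (l' + 1)]
    · have : l' + 1 + (m : Fin d) = l' + ((m : ℕ) + 1 : ℕ) := by push_cast; ring
      simp [this]
    · intro b _ hb
      simp [hb]
    · simp

lemma ghz_eq (m d : ℕ) (y : Fin (m+1) → Fin d) :
    GHZ (m+1) d y = ∑ c : Fin d, if y = Function.const _ c then ((Real.sqrt d : ℂ))⁻¹ else 0 := by
  by_cases h : ∀ k k', y k = y k'
  · have h0 : ∀ c : Fin d, (y = Function.const _ c) ↔ (y 0 = c) := by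
      intro c; constructor
      · intro hc; rw [hc]; rfl
      · intro hc; funext k; rw [← hc]; exact h k _
    simp only [GHZ, if_pos h, h0]
    simp
  · simp only [GHZ, if_neg h]
    symm; apply Finset.sum_eq_zero
    intro c _
    rw [if_neg]
    intro hc; exact h (by intro k k'; rw [hc]; rfl)

open Fin.NatCast Fin.CommRing in
lemma v_apply (m d : ℕ) [NeZero d] (j x : Fin (m+1) → Fin d) :
    (kronPow (fun k => if (k : ℕ) = 0 then clockZ d ^ ((j k : ℕ)) else shiftX d ^ ((j k : ℕ)))
        *ᵥ GHZ (m+1) d) x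
    = ((Real.sqrt d : ℂ))⁻¹ *
        Complex.exp (2 * (Real.pi : ℂ) * Complex.I * ((x 0 : ℕ) : ℂ) / (d : ℂ)) ^ ((j 0 : ℕ)) *
        (if ∀ k : Fin m, x k.succ = x 0 + j k.succ then 1 else 0) := by
  have step1 : (kronPow (fun k => if (k : ℕ) = 0 then clockZ d ^ ((j k : ℕ)) else shiftX d ^ ((j k : ℕ)))
        *ᵥ GHZ (m+1) d) x = ∑ c : Fin d,
          (∏ k : Fin (m+1), (if (k : ℕ) = 0 then clockZ d ^ ((j k : ℕ)) else shiftX d ^ ((j k : ℕ))) (x k) c)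
            * ((Real.sqrt d : ℂ))⁻¹ := by
    rw [Matrix.mulVec, dotProduct]
    simp only [ghz_eq, Finset.mul_sum]
    rw [Finset.sum_comm]
    refine Finset.sum_congr rfl fun c _ => ?_
    rw [Finset.sum_eq_single (Function.const (Fin (m+1)) c)]
    · simp [kronPow]
    · intro y _ hy; simp [hy]
    · simp
  rw [step1]
  have prod_eq : ∀ c : Fin d,
      (∏ k : Fin (m+1), (if (k : ℕ) = 0 then clockZ d ^ ((j k : ℕ)) else shiftX d ^ ((j k : ℕ))) (x k) c)
      = (if x 0 = c then
          Complex.exp (2 * (Real.pi : ℂ) * Complex.I * ((x 0 : ℕ) : ℂ) / (d : ℂ)) ^ ((j 0 : ℕ)) else 0) *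
        (if ∀ k : Fin m, x k.succ = c + j k.succ then 1 else 0) := by
    intro c
    rw [Fin.prod_univ_succ]
    simp only [Fin.val_zero, Fin.val_succ, Nat.succ_ne_zero, if_true, if_false, reduceIte]
    rw [clockZ_pow]
    have hprod : (∏ k : Fin m, (shiftX d ^ ((j k.succ : ℕ))) (x k.succ) c)
        = (if ∀ k : Fin m, x k.succ = c + j k.succ then 1 else 0) := by
      classical
      simp only [shiftX_pow, Fin.cast_val_eq_self]
      rw [Fintype.prod_boole]
      simp
    rw [hprod]
  simp only [prod_eq]
  rw [Finset.sum_eq_single (x 0)]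
  · simp only [if_pos rfl]
    by_cases h : ∀ k : Fin m, x k.succ = x 0 + j k.succ <;> simp [h] <;> ring
  · intro c _ hc
    simp [Ne.symm hc]
  · simp

lemma conj_zeta_pow (d : ℕ) (hd : d ≠ 0) (N : ℕ) :
    (starRingEnd ℂ) (Complex.exp (2 * (Real.pi : ℂ) * Complex.I / (d : ℂ)) ^ N)
      = (Complex.exp (2 * (Real.pi : ℂ) * Complex.I / (d : ℂ)))⁻¹ ^ N := by
  rw [map_pow]
  congr 1
  rw [← Complex.exp_conj, ← Complex.exp_neg]
  congr 1
  have h2 : (starRingEnd ℂ) 2 = 2 := by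
    rw [Complex.conj_eq_iff_im]; norm_num
  simp [map_div₀, _root_.map_mul, Complex.conj_ofReal, Complex.conj_I, h2]
  ring

lemma exp_val_pow (d : ℕ) (l : Fin d) :
    Complex.exp (2 * (Real.pi : ℂ) * Complex.I * ((l : ℕ) : ℂ) / (d : ℂ))
      = Complex.exp (2 * (Real.pi : ℂ) * Complex.I / (d : ℂ)) ^ (l : ℕ) := by
  rw [← Complex.exp_nat_mul]
  congr 1
  ring

lemma ortho_aux (m d : ℕ) (hd : 1 ≤ d) (j j' : Fin (m+1) → Fin d) :
    star (fun x => (kronPow (fun k => if (k : ℕ) = 0 then clockZ d ^ ((j k : ℕ)) else shiftX d ^ ((j k : ℕ)))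
        *ᵥ GHZ (m+1) d) x) ⬝ᵥ (fun x => (kronPow (fun k => if (k : ℕ) = 0 then clockZ d ^ ((j' k : ℕ)) else shiftX d ^ ((j' k : ℕ)))
        *ᵥ GHZ (m+1) d) x) = if j = j' then 1 else 0 := by
  haveI : NeZero d := ⟨by omega⟩
  classical
  rw [dotProduct]
  simp only [Pi.star_apply, v_apply, exp_val_pow]
  set ζ : ℂ := Complex.exp (2 * (Real.pi : ℂ) * Complex.I / (d : ℂ)) with hζdef
  have hζ : IsPrimitiveRoot ζ d := Complex.isPrimitiveRoot_exp d (by omega)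
  have hζ0 : ζ ≠ 0 := Complex.exp_ne_zero _
  by_cases hB : ∀ k : Fin m, j k.succ = j' k.succ
  · set A : ℂ := ((Real.sqrt d : ℂ))⁻¹ with hA
    have hreindex := Equiv.sum_comp (Fin.consEquiv (fun _ : Fin (m+1) => Fin d))
      (fun x : Fin (m+1) → Fin d =>
        star (A * (ζ ^ (x 0 : ℕ)) ^ (j 0 : ℕ) *
          (if ∀ k : Fin m, x k.succ = x 0 + j k.succ then 1 else 0)) *
        (A * (ζ ^ (x 0 : ℕ)) ^ (j' 0 : ℕ) *
          (if ∀ k : Fin m, x k.succ = x 0 + j' k.succ then 1 else 0)))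
    rw [← hreindex, Fintype.sum_prod_type]
    have hinner : ∀ c : Fin d,
        (∑ t : Fin m → Fin d,
          star (A * (ζ ^ ((Fin.consEquiv (fun _ : Fin (m+1) => Fin d)) (c, t) 0 : ℕ)) ^ (j 0 : ℕ) *
            (if ∀ k : Fin m, (Fin.consEquiv (fun _ : Fin (m+1) => Fin d)) (c, t) k.succ
                = (Fin.consEquiv (fun _ : Fin (m+1) => Fin d)) (c, t) 0 + j k.succ then 1 else 0)) *
          (A * (ζ ^ ((Fin.consEquiv (fun _ : Fin (m+1) => Fin d)) (c, t) 0 : ℕ)) ^ (j' 0 : ℕ) *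
            (if ∀ k : Fin m, (Fin.consEquiv (fun _ : Fin (m+1) => Fin d)) (c, t) k.succ
                = (Fin.consEquiv (fun _ : Fin (m+1) => Fin d)) (c, t) 0 + j' k.succ then 1 else 0)))
        = star (A * (ζ ^ (c : ℕ)) ^ (j 0 : ℕ)) * (A * (ζ ^ (c : ℕ)) ^ (j' 0 : ℕ)) := by
      intro c
      simp only [Fin.consEquiv_apply, Fin.cons_zero, Fin.cons_succ]
      rw [Finset.sum_eq_single (fun k : Fin m => c + j k.succ)]
      · simp [hB]
      · intro t _ ht
        have h1 : ¬ (∀ k : Fin m, t k = c + j k.succ) := by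
          intro h; exact ht (funext h)
        have h2 : ¬ (∀ k : Fin m, t k = c + j' k.succ) := by
          intro h; apply h1; intro k; rw [h k, hB k]
        simp [h1, h2]
      · simp
    rw [Finset.sum_congr rfl (fun c (_ : c ∈ Finset.univ) => hinner c)]
    have hAA : A * A = (d : ℂ)⁻¹ := by
      rw [hA, ← mul_inv, ← Complex.ofReal_mul, Real.mul_self_sqrt (by positivity)]
      norm_num
    set w : ℂ := ζ ^ (((j' 0 : ℕ) : ℤ) - ((j 0 : ℕ) : ℤ)) with hw
    have hterm : ∀ c : Fin d, star (A * (ζ ^ (c : ℕ)) ^ (j 0 : ℕ)) * (A * (ζ ^ (c : ℕ)) ^ (j' 0 : ℕ))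
        = (d : ℂ)⁻¹ * w ^ (c : ℕ) := by
      intro c
      have hsA : star A = A := by
        simp [hA, Complex.star_def, map_inv₀, Complex.conj_ofReal]
      rw [star_mul', hsA, ← pow_mul, ← pow_mul, Complex.star_def, conj_zeta_pow d (by omega)]
      have hzz : (ζ⁻¹) ^ ((c : ℕ) * (j 0 : ℕ)) * ζ ^ ((c : ℕ) * (j' 0 : ℕ)) = w ^ (c : ℕ) := by
        rw [inv_pow, ← zpow_natCast ζ ((c : ℕ) * (j 0 : ℕ)), ← zpow_natCast ζ ((c : ℕ) * (j' 0 : ℕ)),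
          ← _root_.zpow_neg, ← zpow_add₀ hζ0, hw, ← zpow_natCast (ζ ^ (((j' 0 : ℕ) : ℤ) - ((j 0 : ℕ) : ℤ))) (c : ℕ),
          ← _root_.zpow_mul]
        congr 1
        push_cast
        ring
      rw [← hζdef]
      rw [show A * ζ⁻¹ ^ ((c : ℕ) * (j 0 : ℕ)) * (A * ζ ^ ((c : ℕ) * (j' 0 : ℕ)))
          = (A * A) * ((ζ⁻¹) ^ ((c : ℕ) * (j 0 : ℕ)) * ζ ^ ((c : ℕ) * (j' 0 : ℕ))) from by ring,
        hAA, hzz]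
    rw [Finset.sum_congr rfl (fun c (_ : c ∈ Finset.univ) => hterm c), ← Finset.mul_sum,
      Fin.sum_univ_eq_sum_range (fun i => w ^ i) d]
    by_cases h0 : j 0 = j' 0
    · have hjj : j = j' := by
        funext k
        refine Fin.cases h0 hB k
      have hw1 : w = 1 := by rw [hw, h0, sub_self, zpow_zero]
      rw [if_pos hjj, hw1]
      simp only [one_pow, Finset.sum_const, Finset.card_range, nsmul_eq_mul, mul_one]
      field_simp
      exact div_self (Nat.cast_ne_zero.mpr (by omega))
    · have hjj : j ≠ j' := fun h => h0 (congrFun h 0)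
      have hw1 : w ≠ 1 := by
        intro h
        rw [hw, hζ.zpow_eq_one_iff_dvd] at h
        have b1 : ((j 0 : ℕ) : ℤ) < d := by exact_mod_cast (j 0).isLt
        have b2 : ((j' 0 : ℕ) : ℤ) < d := by exact_mod_cast (j' 0).isLt
        have b3 : (0 : ℤ) ≤ ((j 0 : ℕ) : ℤ) := by positivity
        have b4 : (0 : ℤ) ≤ ((j' 0 : ℕ) : ℤ) := by positivity
        have b5 : ((j 0 : ℕ) : ℤ) ≠ ((j' 0 : ℕ) : ℤ) := by
          intro hh
          exact h0 (Fin.ext (by exact_mod_cast hh))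
        have habs : |((j' 0 : ℕ) : ℤ) - ((j 0 : ℕ) : ℤ)| < (d : ℤ) :=
          abs_lt.mpr ⟨by omega, by omega⟩
        have hz := Int.eq_zero_of_abs_lt_dvd h habs
        omega
      have hwd : w ^ d = 1 := by
        rw [hw, ← zpow_natCast (ζ ^ (((j' 0 : ℕ) : ℤ) - ((j 0 : ℕ) : ℤ))) d, ← _root_.zpow_mul,
          mul_comm, _root_.zpow_mul, zpow_natCast, hζ.pow_eq_one, _root_.one_zpow]
      rw [geom_sum_eq hw1, hwd, if_neg hjj]
      simp
  · push_neg at hB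
    obtain ⟨k, hk⟩ := hB
    have hjj : j ≠ j' := fun h => hk (by rw [h])
    rw [if_neg hjj]
    apply Finset.sum_eq_zero
    intro x _
    by_cases h1 : ∀ k : Fin m, x k.succ = x 0 + j k.succ
    · by_cases h2 : ∀ k : Fin m, x k.succ = x 0 + j' k.succ
      · exact absurd (add_left_cancel ((h1 k).symm.trans (h2 k))) hk
      · simp [h2]
    · simp [h1]


theorem stmt18 (n d : ℕ) (hn : 1 ≤ n) (hd : 1 ≤ d) :
    IsONBasis (fun j : Fin n → Fin d =>
      kronPow (fun k => if (k : ℕ) = 0 then clockZ d ^ ((j k : ℕ)) else shiftX d ^ ((j k : ℕ)))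
        *ᵥ GHZ n d) := by
  classical
  obtain ⟨m, rfl⟩ : ∃ m, n = m + 1 := ⟨n - 1, by omega⟩
  haveI : NeZero d := ⟨by omega⟩
  haveI : Nonempty (Fin d) := ⟨⟨0, by omega⟩⟩
  have hortho : ∀ j j' : Fin (m+1) → Fin d,
      star ((fun j : Fin (m+1) → Fin d =>
        kronPow (fun k => if (k : ℕ) = 0 then clockZ d ^ ((j k : ℕ)) else shiftX d ^ ((j k : ℕ)))
          *ᵥ GHZ (m+1) d) j) ⬝ᵥ ((fun j : Fin (m+1) → Fin d =>
        kronPow (fun k => if (k : ℕ) = 0 then clockZ d ^ ((j k : ℕ)) else shiftX d ^ ((j k : ℕ)))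
          *ᵥ GHZ (m+1) d) j') = if j = j' then 1 else 0 := by
    intro j j'
    exact ortho_aux m d hd j j'
  refine ⟨hortho, ?_⟩
  set v : (Fin (m+1) → Fin d) → (Fin (m+1) → Fin d) → ℂ := fun j =>
    kronPow (fun k => if (k : ℕ) = 0 then clockZ d ^ ((j k : ℕ)) else shiftX d ^ ((j k : ℕ)))
      *ᵥ GHZ (m+1) d with hv
  have hli : LinearIndependent ℂ v := by
    rw [linearIndependent_iff']
    intro s g hsum i hi
    have h1 : star (v i) ⬝ᵥ (∑ jj ∈ s, g jj • v jj) = 0 := by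
      rw [hsum, dotProduct_zero]
    rw [dotProduct] at h1
    simp only [Finset.sum_apply, Pi.smul_apply, smul_eq_mul, Finset.mul_sum] at h1
    rw [Finset.sum_comm] at h1
    have h2 : ∀ jj ∈ s, (∑ x, star (v i) x * (g jj * v jj x))
        = g jj * (if i = jj then 1 else 0) := by
      intro jj _
      rw [← hortho i jj, dotProduct, Finset.mul_sum]
      apply Finset.sum_congr rfl
      intros
      simp only [Pi.star_apply]
      ring
    rw [Finset.sum_congr rfl h2] at h1
    simp only [mul_ite, mul_one, mul_zero] at h1
    rwa [Finset.sum_ite_eq s i g, if_pos hi] at h1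
  have hcard : Fintype.card (Fin (m+1) → Fin d)
      = Module.finrank ℂ ((Fin (m+1) → Fin d) → ℂ) := by
    rw [Module.finrank_pi]
  exact hli.span_eq_top_of_card_eq_finrank hcard
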